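/- arXiv:1306.3396 — 5 statements merged into one kernel-verified Lean document; each statement's English description precedes it below -/
import Mathlib

section
/- For ω ≥ 1 and 1/√ω ≤ γ ≤ √ω, define φ^ω_γ(x) = π/2 + √ω·arcsin((γ/√ω)·cos x) for |x| ≤ π/2, and φ^ω_γ(x) = arccos(γ√ω·sin((|x|-π/2)/√ω)) for π/2 < |x| ≤ π/2 + √ω·arcsin(1/(γ√ω)). Then φ^ω_{1/γ} is the inverse function of φ^ω_γ on [0, π/2 + √ω·arcsin(1/(γ√ω))]. -/
open Real Set

/-- The function `φ^ω_γ`, defined piecewise. -/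
noncomputable def phiF (om ga x : ℝ) : ℝ :=
  if |x| ≤ π / 2 then
    π / 2 + Real.sqrt om * Real.arcsin ((ga / Real.sqrt om) * Real.cos x)
  else
    Real.arccos (ga * Real.sqrt om * Real.sin ((|x| - π / 2) / Real.sqrt om))

lemma phiF_key (om ga : ℝ) (hom : 1 ≤ om)
    (hga1 : 1 / Real.sqrt om ≤ ga) (hga2 : ga ≤ Real.sqrt om) :
    ∀ x ∈ Icc (0 : ℝ) (π / 2 + Real.sqrt om * Real.arcsin (1 / (ga * Real.sqrt om))),
      phiF om ga⁻¹ (phiF om ga x) = x := by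
  intro x hx
  set s := Real.sqrt om with hs
  have hs1 : 1 ≤ s := Real.one_le_sqrt.mpr hom
  have hs0 : 0 < s := by linarith
  have hga0 : 0 < ga := lt_of_lt_of_le (by positivity) hga1
  have hgs1 : 1 ≤ ga * s := by
    rw [div_le_iff₀ hs0] at hga1; linarith
  obtain ⟨hx0, hxu⟩ := hx
  have hpi : 0 < π := Real.pi_pos
  rcases le_or_gt x (π / 2) with hle | hgt
  · -- first branch
    have habs : |x| ≤ π / 2 := abs_le.mpr ⟨by linarith, hle⟩
    have hcos0 : 0 ≤ Real.cos x := Real.cos_nonneg_of_mem_Icc ⟨by linarith, hle⟩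
    have hcos1 : Real.cos x ≤ 1 := Real.cos_le_one x
    have hratio : ga / s ≤ 1 := (div_le_one hs0).mpr hga2
    set a := ga / s * Real.cos x with ha
    have ha0 : 0 ≤ a := by positivity
    have ha1 : a ≤ 1 := by
      calc a ≤ ga / s * 1 := by
              apply mul_le_mul_of_nonneg_left hcos1 (by positivity)
        _ ≤ 1 := by linarith
    have harcsin0 : 0 ≤ Real.arcsin a := Real.arcsin_nonneg.mpr ha0
    have hy : phiF om ga x = π / 2 + s * Real.arcsin a := by
      rw [phiF, if_pos habs]
    rcases lt_or_eq_of_le hle with hlt | heq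
    · -- x < π/2 : cos x > 0
      have hcospos : 0 < Real.cos x :=
        Real.cos_pos_of_mem_Ioo ⟨by linarith, hlt⟩
      have hapos : 0 < a := by positivity
      have harcpos : 0 < Real.arcsin a := Real.arcsin_pos.mpr hapos
      have hygt : π / 2 < π / 2 + s * Real.arcsin a := by nlinarith
      have hyabs : ¬ |π / 2 + s * Real.arcsin a| ≤ π / 2 := by
        rw [abs_of_pos (by linarith)]; linarith
      rw [hy, phiF, if_neg hyabs, abs_of_pos (by linarith)]
      have hdiv : (π / 2 + s * Real.arcsin a - π / 2) / s = Real.arcsin a := by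
        field_simp
        ring
      rw [hdiv, Real.sin_arcsin (by linarith) ha1]
      have : ga⁻¹ * s * a = Real.cos x := by
        rw [ha]; field_simp
      rw [this, Real.arccos_cos hx0 (by linarith)]
    · -- x = π/2
      subst heq
      have hc : Real.cos (π / 2) = 0 := Real.cos_pi_div_two
      have h1 : phiF om ga (π / 2) = π / 2 := by
        rw [phiF, if_pos habs, hc, mul_zero, Real.arcsin_zero, mul_zero, add_zero]
      rw [h1, phiF, if_pos habs, hc, mul_zero, Real.arcsin_zero, mul_zero, add_zero]
  · -- second branch : π/2 < x
    have habs : ¬ |x| ≤ π / 2 := by rw [abs_of_nonneg hx0]; linarith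
    set u1 := 1 / (ga * s) with hu1
    have hu10 : 0 < u1 := by positivity
    have hu11 : u1 ≤ 1 := by rw [hu1]; exact div_le_one_of_le₀ hgs1 (by positivity)
    have harc_mem := Real.arcsin_mem_Icc u1
    set t := (x - π / 2) / s with ht
    have ht0 : 0 < t := div_pos (by linarith) hs0
    have htle : t ≤ Real.arcsin u1 := by
      rw [ht, div_le_iff₀ hs0]
      have := harc_mem.2
      nlinarith [hxu]
    have htpi2 : t ≤ π / 2 := le_trans htle harc_mem.2
    have hsint_pos : 0 < Real.sin t :=
      Real.sin_pos_of_pos_of_lt_pi ht0 (by linarith)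
    have hsint_le : Real.sin t ≤ u1 := by
      have := Real.strictMonoOn_sin.monotoneOn ⟨by linarith, htpi2⟩ harc_mem htle
      rwa [Real.sin_arcsin (by linarith) hu11] at this
    set u := ga * s * Real.sin t with hu
    have hupos : 0 < u := by positivity
    have hule : u ≤ 1 := by
      have : ga * s * Real.sin t ≤ ga * s * u1 := by
        apply mul_le_mul_of_nonneg_left hsint_le (by positivity)
      rw [hu1] at this
      calc u ≤ ga * s * (1 / (ga * s)) := this
        _ = 1 := by field_simp
    have hy : phiF om ga x = Real.arccos u := by
      rw [phiF, if_neg habs, abs_of_nonneg hx0]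
    have hyle : Real.arccos u ≤ π / 2 := Real.arccos_le_pi_div_two.mpr hupos.le
    have hynn : 0 ≤ Real.arccos u := Real.arccos_nonneg u
    have hyabs : |Real.arccos u| ≤ π / 2 := abs_le.mpr ⟨by linarith, hyle⟩
    rw [hy, phiF, if_pos hyabs, Real.cos_arccos (by linarith) hule]
    have : ga⁻¹ / s * u = Real.sin t := by
      rw [hu]; field_simp
    rw [this, Real.arcsin_sin (by linarith) htpi2, ht]
    field_simp
    rw [← hs]
    ring

/-- For `ω ≥ 1` and `1/√ω ≤ γ ≤ √ω`, `φ^ω_{1/γ}` is the inverse function of `φ^ω_γ`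
on `[0, π/2 + √ω·arcsin(1/(γ√ω))]`. -/
theorem stmt4 (om ga : ℝ) (hom : 1 ≤ om)
    (hga1 : 1 / Real.sqrt om ≤ ga) (hga2 : ga ≤ Real.sqrt om) :
    (∀ x ∈ Icc (0 : ℝ) (π / 2 + Real.sqrt om * Real.arcsin (1 / (ga * Real.sqrt om))),
      phiF om ga⁻¹ (phiF om ga x) = x) ∧
    (∀ x ∈ Icc (0 : ℝ) (π / 2 + Real.sqrt om * Real.arcsin (1 / (ga⁻¹ * Real.sqrt om))),
      phiF om ga (phiF om ga⁻¹ x) = x) := by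
  have hs0 : 0 < Real.sqrt om := by
    have : (1:ℝ) ≤ Real.sqrt om := Real.one_le_sqrt.mpr hom
    linarith
  have hga0 : 0 < ga := lt_of_lt_of_le (by positivity) hga1
  constructor
  · exact phiF_key om ga hom hga1 hga2
  · have h1 : 1 / Real.sqrt om ≤ ga⁻¹ := by
      rw [one_div]
      exact inv_anti₀ hga0 hga2
    have h2 : ga⁻¹ ≤ Real.sqrt om := by
      rw [div_le_iff₀ hs0] at hga1
      rw [inv_le_comm₀ hga0 hs0, ← one_div, div_le_iff₀ hs0]
      linarith
    have := phiF_key om ga⁻¹ hom h1 h2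
    rw [inv_inv] at this
    exact this
end

section
/- For ω ≥ 1 and 1/√ω ≤ γ ≤ √ω, the function φ^ω_γ defined by φ^ω_γ(x) = π/2 + √ω·arcsin((γ/√ω)·cos x) for |x| ≤ π/2 and φ^ω_γ(x) = arccos(γ√ω·sin((|x|-π/2)/√ω)) for π/2 < |x| ≤ π/2 + √ω·arcsin(1/(γ√ω)) is continuous, even, strictly positive on the open interval (-π/2 - √ω·arcsin(1/(γ√ω)), π/2 + √ω·arcsin(1/(γ√ω))), and vanishes at the endpoints. -/
open Real Set

/-- For `ω ≥ 1` and `1/√ω ≤ γ ≤ √ω`, writing `L = π/2 + √ω·arcsin(1/(γ√ω))`, the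
function `φ^ω_γ` is continuous on `[-L, L]`, even, strictly positive on `(-L, L)`,
and vanishes at `±L`. -/
theorem stmt5 (om ga : ℝ) (hom : 1 ≤ om)
    (hga1 : 1 / Real.sqrt om ≤ ga) (hga2 : ga ≤ Real.sqrt om)
    (L : ℝ) (hL : L = π / 2 + Real.sqrt om * Real.arcsin (1 / (ga * Real.sqrt om))) :
    ContinuousOn (phiF om ga) (Icc (-L) L) ∧
    (∀ x, phiF om ga (-x) = phiF om ga x) ∧
    (∀ x ∈ Ioo (-L) L, 0 < phiF om ga x) ∧
    phiF om ga L = 0 ∧ phiF om ga (-L) = 0 := by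
  have hs1 : (1:ℝ) ≤ Real.sqrt om := by
    rw [show (1:ℝ) = Real.sqrt 1 by simp]
    exact Real.sqrt_le_sqrt hom
  have hs0 : 0 < Real.sqrt om := lt_of_lt_of_le one_pos hs1
  have hga0 : 0 < ga := lt_of_lt_of_le (by positivity) hga1
  have hgs : 1 ≤ ga * Real.sqrt om := by
    have := mul_le_mul_of_nonneg_right hga1 hs0.le
    rwa [one_div, inv_mul_cancel₀ hs0.ne'] at this
  have hgs0 : 0 < ga * Real.sqrt om := lt_of_lt_of_le one_pos hgs
  have hinv1 : 1 / (ga * Real.sqrt om) ≤ 1 := by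
    rw [div_le_one hgs0]; exact hgs
  have hinv0 : 0 < 1 / (ga * Real.sqrt om) := by positivity
  have hsin : Real.sin (Real.arcsin (1 / (ga * Real.sqrt om))) = 1 / (ga * Real.sqrt om) :=
    Real.sin_arcsin (by linarith) hinv1
  have harc0 : 0 < Real.arcsin (1 / (ga * Real.sqrt om)) := Real.arcsin_pos.mpr hinv0
  have hLpi : π / 2 < L := by
    have := mul_pos hs0 harc0
    rw [hL]; linarith
  have hL0 : 0 < L := lt_trans (by positivity) hLpi
  -- continuity
  have hcont : Continuous (phiF om ga) := by
    unfold phiF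
    apply Continuous.if_le
    · exact continuous_const.add (continuous_const.mul
        (Real.continuous_arcsin.comp (continuous_const.mul Real.continuous_cos)))
    · exact Real.continuous_arccos.comp (continuous_const.mul
        (Real.continuous_sin.comp ((continuous_abs.sub continuous_const).div_const _)))
    · exact continuous_abs
    · exact continuous_const
    · intro x hx
      have hc : Real.cos x = 0 := by
        rcases (abs_eq (by positivity : (0:ℝ) ≤ π / 2)).mp hx with h | h
        · rw [h]; exact Real.cos_pi_div_two
        · rw [h]; simp [Real.cos_pi_div_two]
      rw [hc, hx]
      simp [Real.arccos_zero, Real.arcsin_zero]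
  -- evenness
  have heven : ∀ x, phiF om ga (-x) = phiF om ga x := by
    intro x; simp [phiF, abs_neg, Real.cos_neg]
  -- vanishing at L
  have hphiL : phiF om ga L = 0 := by
    have habs : |L| = L := abs_of_pos hL0
    have hnot : ¬ |L| ≤ π / 2 := by rw [habs]; linarith
    rw [phiF, if_neg hnot, habs, hL]
    have hdiv : (π / 2 + Real.sqrt om * Real.arcsin (1 / (ga * Real.sqrt om)) - π / 2)
        / Real.sqrt om = Real.arcsin (1 / (ga * Real.sqrt om)) := by
      field_simp
      ring
    rw [hdiv, hsin, mul_one_div, div_self hgs0.ne', Real.arccos_one]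
  -- positivity
  have hpos : ∀ x ∈ Ioo (-L) L, 0 < phiF om ga x := by
    intro x hx
    by_cases hcase : |x| ≤ π / 2
    · rw [phiF, if_pos hcase]
      have hab := abs_le.mp hcase
      have hcos : 0 ≤ Real.cos x := Real.cos_nonneg_of_mem_Icc ⟨by linarith [hab.1], hab.2⟩
      have harg : 0 ≤ (ga / Real.sqrt om) * Real.cos x := mul_nonneg (by positivity) hcos
      have h1 : 0 ≤ Real.arcsin ((ga / Real.sqrt om) * Real.cos x) :=
        Real.arcsin_nonneg.mpr harg
      have h2 : 0 ≤ Real.sqrt om * Real.arcsin ((ga / Real.sqrt om) * Real.cos x) :=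
        mul_nonneg hs0.le h1
      have := Real.pi_pos
      linarith
    · push_neg at hcase
      rw [phiF, if_neg (not_le.mpr hcase)]
      apply Real.arccos_pos.mpr
      set u := (|x| - π / 2) / Real.sqrt om with hu
      have hxL : |x| < L := abs_lt.mpr ⟨hx.1, hx.2⟩
      have hu0 : 0 ≤ u := div_nonneg (by linarith) hs0.le
      have huA : u < Real.arcsin (1 / (ga * Real.sqrt om)) := by
        rw [hu, div_lt_iff₀ hs0, mul_comm]
        rw [hL] at hxL
        linarith
      have huhi : u ≤ π / 2 :=
        le_of_lt (lt_of_lt_of_le huA (Real.arcsin_le_pi_div_two _))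
      have hpi := Real.pi_pos
      have hsinlt : Real.sin u < 1 / (ga * Real.sqrt om) := by
        calc Real.sin u < Real.sin (Real.arcsin (1 / (ga * Real.sqrt om))) := by
              apply Real.strictMonoOn_sin ⟨by linarith, huhi⟩
                ⟨Real.neg_pi_div_two_le_arcsin _, Real.arcsin_le_pi_div_two _⟩ huA
          _ = _ := hsin
      have hlt : ga * Real.sqrt om * Real.sin u
          < ga * Real.sqrt om * (1 / (ga * Real.sqrt om)) :=
        (mul_lt_mul_iff_right₀ hgs0).mpr hsinlt
      rwa [mul_one_div, div_self hgs0.ne'] at hlt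
  exact ⟨hcont.continuousOn, heven, hpos, hphiL, (heven L).trans hphiL⟩
end

section
/- Let ω ≥ 1 and γ ∈ [1/√ω, √ω]. Define u^ω_γ on the domain Ω^ω_γ = {(x,y) : |y| < φ^ω_γ(x)} piecewise by: u = γ·cos x + cos y if |x|,|y| ≤ π/2; u = γ√ω·cos((|x|-π/2)/√ω + π/2) + cos y if |x| ≥ π/2; u = γ·cos x + √ω·cos((|y|-π/2)/√ω + π/2) if |y| ≥ π/2. Then u^ω_γ is continuous on the closure of Ω^ω_γ, strictly positive in Ω^ω_γ, and vanishes on ∂Ω^ω_γ. -/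
open Real Set

/-- The domain `Ω^ω_γ = {(x,y) : |y| < φ^ω_γ(x)}` (with `x` in the domain of `φ^ω_γ`). -/
noncomputable def OmDom (om ga : ℝ) : Set (ℝ × ℝ) :=
  {p | |p.1| ≤ π / 2 + Real.sqrt om * Real.arcsin (1 / (ga * Real.sqrt om)) ∧
       |p.2| < phiF om ga p.1}

/-- The eigenfunction `u^ω_γ`, defined piecewise. -/
noncomputable def uEig (om ga x y : ℝ) : ℝ :=
  if |x| ≤ π / 2 ∧ |y| ≤ π / 2 then ga * Real.cos x + Real.cos y
  else if π / 2 ≤ |x| then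
    ga * Real.sqrt om * Real.cos ((|x| - π / 2) / Real.sqrt om + π / 2) + Real.cos y
  else
    ga * Real.cos x + Real.sqrt om * Real.cos ((|y| - π / 2) / Real.sqrt om + π / 2)

/-- x-profile of the eigenfunction. -/
noncomputable def Fx (om ga x : ℝ) : ℝ :=
  if |x| ≤ π / 2 then ga * Real.cos x
  else ga * Real.sqrt om * Real.cos ((|x| - π / 2) / Real.sqrt om + π / 2)

/-- y-profile of the eigenfunction. -/
noncomputable def Gy (om y : ℝ) : ℝ :=
  if |y| ≤ π / 2 then Real.cos y
  else Real.sqrt om * Real.cos ((|y| - π / 2) / Real.sqrt om + π / 2)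

lemma cont_Fx (om ga : ℝ) : Continuous (Fx om ga) := by
  unfold Fx
  apply Continuous.if_le
  · exact continuous_const.mul Real.continuous_cos
  · exact continuous_const.mul (Real.continuous_cos.comp
      (((continuous_abs.sub continuous_const).div_const _).add continuous_const))
  · exact continuous_abs
  · exact continuous_const
  · intro x hx
    rw [← Real.cos_abs, hx]
    simp [Real.cos_add_pi_div_two]

lemma cont_Gy (om : ℝ) : Continuous (Gy om) := by
  unfold Gy
  apply Continuous.if_le
  · exact Real.continuous_cos
  · exact continuous_const.mul (Real.continuous_cos.comp
      (((continuous_abs.sub continuous_const).div_const _).add continuous_const))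
  · exact continuous_abs
  · exact continuous_const
  · intro x hx
    rw [← Real.cos_abs, hx]
    simp [Real.cos_add_pi_div_two]

lemma cont_phiF (om ga : ℝ) : Continuous (phiF om ga) := by
  unfold phiF
  apply Continuous.if_le
  · exact continuous_const.add (continuous_const.mul (Real.continuous_arcsin.comp
      (continuous_const.mul Real.continuous_cos)))
  · exact Real.continuous_arccos.comp (continuous_const.mul (Real.continuous_sin.comp
      ((continuous_abs.sub continuous_const).div_const _)))
  · exact continuous_abs
  · exact continuous_const
  · intro x hx
    rw [← Real.cos_abs, hx]
    simp

lemma Gy_abs (om y : ℝ) : Gy om y = Gy om |y| := by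
  unfold Gy
  rw [abs_abs, Real.cos_abs]

lemma Gy_ge (om : ℝ) {t : ℝ} (ht : π / 2 ≤ t) :
    Gy om t = -(Real.sqrt om * Real.sin ((t - π / 2) / Real.sqrt om)) := by
  have hπ := Real.pi_pos
  have ht0 : 0 ≤ t := by linarith
  unfold Gy
  rw [abs_of_nonneg ht0]
  split_ifs with h
  · have : t = π / 2 := le_antisymm h ht
    simp [this]
  · rw [Real.cos_add_pi_div_two]; ring

lemma Gy_le (om : ℝ) {t : ℝ} (h : |t| ≤ π / 2) : Gy om t = Real.cos t := if_pos h

lemma Gy_anti (om : ℝ) (hom : 1 ≤ om) :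
    StrictAntiOn (Gy om) (Set.Icc 0 (π / 2 + Real.sqrt om * (π / 2))) := by
  have hπ := Real.pi_pos
  have hs1 : 1 ≤ Real.sqrt om := by
    rw [show (1:ℝ) = Real.sqrt 1 by simp]; exact Real.sqrt_le_sqrt hom
  have hs0 : 0 < Real.sqrt om := by linarith
  intro a ha b hb hab
  obtain ⟨ha0, ha1⟩ := ha
  obtain ⟨hb0, hb1⟩ := hb
  rcases le_or_gt b (π / 2) with hbl | hbl
  · rw [Gy_le om (by rw [abs_of_nonneg hb0]; exact hbl),
      Gy_le om (by rw [abs_of_nonneg ha0]; linarith)]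
    exact Real.strictAntiOn_cos ⟨ha0, by linarith⟩ ⟨hb0, by linarith⟩ hab
  · rw [Gy_ge om hbl.le]
    have hbub : (b - π / 2) / Real.sqrt om ≤ π / 2 := by
      rw [div_le_iff₀ hs0]; nlinarith
    have hbpos : 0 < Real.sin ((b - π / 2) / Real.sqrt om) := by
      apply Real.sin_pos_of_pos_of_lt_pi
      · exact div_pos (by linarith) hs0
      · linarith
    rcases le_or_gt (π / 2) a with hal | hal
    · rw [Gy_ge om hal]
      have haub : (a - π / 2) / Real.sqrt om ≤ π / 2 := by
        rw [div_le_iff₀ hs0]; nlinarith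
      have ha0' : 0 ≤ (a - π / 2) / Real.sqrt om :=
        div_nonneg (by linarith) hs0.le
      have hmono := Real.strictMonoOn_sin
        ⟨by linarith, haub⟩ ⟨by linarith [div_pos (show (0:ℝ) < b - π/2 by linarith) hs0], hbub⟩
        ((div_lt_div_iff_of_pos_right hs0).mpr (by linarith))
      have := mul_lt_mul_of_pos_left hmono hs0
      linarith
    · rw [Gy_le om (by rw [abs_of_nonneg ha0]; linarith)]
      have : 0 < Real.cos a := Real.cos_pos_of_mem_Ioo ⟨by linarith, hal⟩
      nlinarith

lemma uEig_eq (om ga : ℝ) {x y : ℝ} (hcond : π / 2 ≤ |x| → |y| ≤ π / 2) :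
    uEig om ga x y = Fx om ga x + Gy om y := by
  unfold uEig Fx Gy
  by_cases hA : |x| ≤ π / 2 ∧ |y| ≤ π / 2
  · rw [if_pos hA, if_pos hA.1, if_pos hA.2]
  · by_cases hB : π / 2 ≤ |x|
    · have hy : |y| ≤ π / 2 := hcond hB
      rw [if_neg hA, if_pos hB, if_pos hy]
      split_ifs with hC
      · have hxe : |x| = π / 2 := le_antisymm hC hB
        have hc : Real.cos x = 0 := by
          rw [← Real.cos_abs x, hxe, Real.cos_pi_div_two]
        rw [hxe]
        simp [hc]
      · rfl
    · push_neg at hB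
      have hx' : |x| ≤ π / 2 := hB.le
      have hy' : ¬ |y| ≤ π / 2 := fun hy => hA ⟨hx', hy⟩
      rw [if_neg hA, if_neg (not_le.mpr hB), if_pos hx', if_neg hy']

lemma phiF_props (om ga : ℝ) (hom : 1 ≤ om) (hga1 : 1 / Real.sqrt om ≤ ga)
    (hga2 : ga ≤ Real.sqrt om) {x : ℝ}
    (hx : |x| ≤ π / 2 + Real.sqrt om * Real.arcsin (1 / (ga * Real.sqrt om))) :
    0 ≤ phiF om ga x ∧ phiF om ga x ≤ π / 2 + Real.sqrt om * (π / 2) ∧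
      Gy om (phiF om ga x) = -Fx om ga x ∧ (π / 2 ≤ |x| → phiF om ga x ≤ π / 2) := by
  have hπ := Real.pi_pos
  have hs1 : 1 ≤ Real.sqrt om := by
    rw [show (1:ℝ) = Real.sqrt 1 by simp]; exact Real.sqrt_le_sqrt hom
  have hs0 : 0 < Real.sqrt om := by linarith
  have hga0 : 0 < ga := lt_of_lt_of_le (by positivity) hga1
  have hgs1 : 1 ≤ ga * Real.sqrt om := by
    rw [div_le_iff₀ hs0] at hga1; linarith
  have hgs0 : 0 < ga * Real.sqrt om := by positivity
  have hinv0 : 0 < 1 / (ga * Real.sqrt om) := by positivity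
  have hinv1 : 1 / (ga * Real.sqrt om) ≤ 1 := by
    rw [div_le_one hgs0]; exact hgs1
  unfold phiF Fx
  split_ifs with h
  · have hxI : x ∈ Set.Icc (-(π/2)) (π/2) := by
      rcases abs_le.mp h with ⟨h1, h2⟩; exact ⟨h1, h2⟩
    have hc0 : 0 ≤ Real.cos x := Real.cos_nonneg_of_mem_Icc hxI
    have hc1 : Real.cos x ≤ 1 := Real.cos_le_one x
    have hds : ga / Real.sqrt om ≤ 1 := by rw [div_le_one hs0]; exact hga2
    have hz0 : 0 ≤ ga / Real.sqrt om * Real.cos x := by positivity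
    have hz1 : ga / Real.sqrt om * Real.cos x ≤ 1 := by nlinarith [div_pos hga0 hs0]
    have ha0 : 0 ≤ Real.arcsin (ga / Real.sqrt om * Real.cos x) :=
      Real.arcsin_nonneg.mpr hz0
    have ha1 : Real.arcsin (ga / Real.sqrt om * Real.cos x) ≤ π / 2 :=
      Real.arcsin_le_pi_div_two _
    refine ⟨by nlinarith, by nlinarith, ?_, ?_⟩
    · rw [Gy_ge om (by nlinarith)]
      have harg : (π / 2 + Real.sqrt om * Real.arcsin (ga / Real.sqrt om * Real.cos x)
          - π / 2) / Real.sqrt om = Real.arcsin (ga / Real.sqrt om * Real.cos x) := by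
        field_simp
        ring
      rw [harg, Real.sin_arcsin (by linarith) hz1]
      field_simp
    · intro h'
      have hxe : |x| = π / 2 := le_antisymm h h'
      have hc : Real.cos x = 0 := by
        rw [← Real.cos_abs x, hxe, Real.cos_pi_div_two]
      simp [hc]
  · push_neg at h
    have hr0 : 0 < (|x| - π / 2) / Real.sqrt om := div_pos (by linarith) hs0
    have hrle : (|x| - π / 2) / Real.sqrt om ≤ Real.arcsin (1 / (ga * Real.sqrt om)) := by
      rw [div_le_iff₀ hs0]
      have := Real.arcsin_le_pi_div_two (1 / (ga * Real.sqrt om))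
      nlinarith [Real.arcsin_nonneg.mpr hinv0.le]
    have hr2 : (|x| - π / 2) / Real.sqrt om ≤ π / 2 :=
      le_trans hrle (Real.arcsin_le_pi_div_two _)
    have hsinle : Real.sin ((|x| - π / 2) / Real.sqrt om) ≤ 1 / (ga * Real.sqrt om) := by
      have := Real.strictMonoOn_sin.monotoneOn
        (a := (|x| - π / 2) / Real.sqrt om) (b := Real.arcsin (1 / (ga * Real.sqrt om)))
        ⟨by linarith, hr2⟩
        ⟨Real.neg_pi_div_two_le_arcsin _, Real.arcsin_le_pi_div_two _⟩ hrle
      rwa [Real.sin_arcsin (by linarith) hinv1] at this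
    have hsin0 : 0 < Real.sin ((|x| - π / 2) / Real.sqrt om) :=
      Real.sin_pos_of_pos_of_lt_pi hr0 (by linarith)
    have hz0 : 0 < ga * Real.sqrt om * Real.sin ((|x| - π / 2) / Real.sqrt om) := by
      positivity
    have hz1 : ga * Real.sqrt om * Real.sin ((|x| - π / 2) / Real.sqrt om) ≤ 1 := by
      have hone : ga * Real.sqrt om * (1 / (ga * Real.sqrt om)) = 1 := by
        field_simp
      nlinarith
    have harc2 : Real.arccos (ga * Real.sqrt om *
        Real.sin ((|x| - π / 2) / Real.sqrt om)) ≤ π / 2 :=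
      Real.arccos_le_pi_div_two.mpr hz0.le
    refine ⟨Real.arccos_nonneg _, le_trans (Real.arccos_le_pi _) (by nlinarith), ?_,
      fun _ => harc2⟩
    rw [Gy_le om (by
      rw [abs_of_nonneg (Real.arccos_nonneg _)]; exact harc2)]
    rw [Real.cos_arccos (by linarith) hz1, Real.cos_add_pi_div_two]
    ring

lemma phiF_at_L (om ga : ℝ) (hom : 1 ≤ om) (hga1 : 1 / Real.sqrt om ≤ ga)
    {x : ℝ} (hx : |x| = π / 2 + Real.sqrt om * Real.arcsin (1 / (ga * Real.sqrt om))) :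
    phiF om ga x = 0 := by
  have hπ := Real.pi_pos
  have hs1 : 1 ≤ Real.sqrt om := by
    rw [show (1:ℝ) = Real.sqrt 1 by simp]; exact Real.sqrt_le_sqrt hom
  have hs0 : 0 < Real.sqrt om := by linarith
  have hga0 : 0 < ga := lt_of_lt_of_le (by positivity) hga1
  have hgs1 : 1 ≤ ga * Real.sqrt om := by
    rw [div_le_iff₀ hs0] at hga1; linarith
  have hgs0 : 0 < ga * Real.sqrt om := by positivity
  have hinv0 : 0 < 1 / (ga * Real.sqrt om) := by positivity
  have hinv1 : 1 / (ga * Real.sqrt om) ≤ 1 := by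
    rw [div_le_one hgs0]; exact hgs1
  have harc0 : 0 < Real.arcsin (1 / (ga * Real.sqrt om)) := Real.arcsin_pos.mpr hinv0
  have hgt : ¬ |x| ≤ π / 2 := by rw [hx]; nlinarith
  unfold phiF
  rw [if_neg hgt, hx]
  have harg : (π / 2 + Real.sqrt om * Real.arcsin (1 / (ga * Real.sqrt om)) - π / 2)
      / Real.sqrt om = Real.arcsin (1 / (ga * Real.sqrt om)) := by field_simp; ring
  rw [harg, Real.sin_arcsin (by linarith) hinv1]
  rw [mul_one_div_cancel (ne_of_gt hgs0), Real.arccos_one]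

/-- For `ω ≥ 1` and `γ ∈ [1/√ω, √ω]`, the function `u^ω_γ` is continuous on the closure
of `Ω^ω_γ`, strictly positive in `Ω^ω_γ`, and vanishes on `∂Ω^ω_γ`. -/
theorem stmt8 (om ga : ℝ) (hom : 1 ≤ om)
    (hga1 : 1 / Real.sqrt om ≤ ga) (hga2 : ga ≤ Real.sqrt om) :
    ContinuousOn (fun p : ℝ × ℝ => uEig om ga p.1 p.2) (closure (OmDom om ga)) ∧
    (∀ p ∈ OmDom om ga, 0 < uEig om ga p.1 p.2) ∧
    (∀ p ∈ frontier (OmDom om ga), uEig om ga p.1 p.2 = 0) := by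
  have hπ := Real.pi_pos
  have hs1 : 1 ≤ Real.sqrt om := by
    rw [show (1:ℝ) = Real.sqrt 1 by simp]; exact Real.sqrt_le_sqrt hom
  have hs0 : 0 < Real.sqrt om := by linarith
  have hga0 : 0 < ga := lt_of_lt_of_le (by positivity) hga1
  set L := π / 2 + Real.sqrt om * Real.arcsin (1 / (ga * Real.sqrt om)) with hL
  have hOmEq : OmDom om ga = {p : ℝ × ℝ | |p.1| < L ∧ |p.2| < phiF om ga p.1} := by
    ext p
    simp only [OmDom, Set.mem_setOf_eq, ← hL]
    constructor
    · rintro ⟨h1, h2⟩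
      refine ⟨lt_of_le_of_ne h1 ?_, h2⟩
      intro he
      rw [hL] at he
      rw [phiF_at_L om ga hom hga1 he] at h2
      exact absurd h2 (not_lt.mpr (abs_nonneg _))
    · rintro ⟨h1, h2⟩; exact ⟨h1.le, h2⟩
  have hOpen : IsOpen (OmDom om ga) := by
    rw [hOmEq]
    exact IsOpen.inter
      (isOpen_lt (continuous_abs.comp continuous_fst) continuous_const)
      (isOpen_lt (continuous_abs.comp continuous_snd)
        ((cont_phiF om ga).comp continuous_fst))
  set C := {p : ℝ × ℝ | |p.1| ≤ L ∧ |p.2| ≤ phiF om ga p.1} with hC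
  have hCclosed : IsClosed C :=
    IsClosed.inter
      (isClosed_le (continuous_abs.comp continuous_fst) continuous_const)
      (isClosed_le (continuous_abs.comp continuous_snd)
        ((cont_phiF om ga).comp continuous_fst))
  have hsub : OmDom om ga ⊆ C := fun p hp => ⟨hp.1, hp.2.le⟩
  have hclC : closure (OmDom om ga) ⊆ C := closure_minimal hsub hCclosed
  have hEqC : ∀ p ∈ C, uEig om ga p.1 p.2 = Fx om ga p.1 + Gy om p.2 := by
    intro p hp
    exact uEig_eq om ga
      (fun hx => le_trans hp.2 ((phiF_props om ga hom hga1 hga2 hp.1).2.2.2 hx))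
  refine ⟨?_, ?_, ?_⟩
  · refine ContinuousOn.congr (Continuous.continuousOn ?_)
      (fun p hp => hEqC p (hclC hp))
    exact ((cont_Fx om ga).comp continuous_fst).add ((cont_Gy om).comp continuous_snd)
  · intro p hp
    obtain ⟨h1, h2⟩ := hp
    obtain ⟨hph0, hph1, hkey, _⟩ := phiF_props om ga hom hga1 hga2 h1
    rw [hEqC p (hsub ⟨h1, h2⟩), Gy_abs]
    have hlt := Gy_anti om hom ⟨abs_nonneg _, by linarith⟩ ⟨hph0, hph1⟩ h2
    rw [hkey] at hlt
    linarith
  · intro p hp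
    have hpc : p ∈ C := hclC (frontier_subset_closure hp)
    have hpn : p ∉ OmDom om ga := fun hmem => hp.2 (by rw [hOpen.interior_eq]; exact hmem)
    obtain ⟨h1, h2⟩ := hpc
    have heq : |p.2| = phiF om ga p.1 := by
      by_contra hne
      exact hpn ⟨h1, lt_of_le_of_ne h2 hne⟩
    obtain ⟨hph0, hph1, hkey, _⟩ := phiF_props om ga hom hga1 hga2 h1
    rw [hEqC p ⟨h1, h2⟩, Gy_abs, heq, hkey]
    ring
end

section
/- For ω ≥ 1, the area of the region Ω^ω_γ = {(x,y) : |y| < φ^ω_γ(x)} equals π² + 4√ω·∫₀^{π/2} [arcsin((γ/√ω)·cos x) + arcsin((1/(γ√ω))·cos x)] dx, for any γ ∈ [1/√ω, √ω]. -/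
open Real Set MeasureTheory

lemma key_iff (c : ℝ) (hc : 1 ≤ c) (u y : ℝ) :
    (u ∈ Ioo 0 (Real.arcsin (1/c)) ∧ y ∈ Ioo 0 (Real.arccos (c * Real.sin u))) ↔
    (y ∈ Ioo 0 (π/2) ∧ u ∈ Ioo 0 (Real.arcsin (1/c * Real.cos y))) := by
  have hc0 : (0:ℝ) < c := lt_of_lt_of_le one_pos hc
  have hinv0 : (0:ℝ) < 1/c := by positivity
  have hinv1 : 1/c ≤ 1 := by rw [div_le_one hc0]; exact hc
  have hsa : Real.sin (Real.arcsin (1/c)) = 1/c := Real.sin_arcsin (by linarith) hinv1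
  have hapi : Real.arcsin (1/c) ≤ π/2 := Real.arcsin_le_pi_div_two _
  constructor
  · rintro ⟨⟨hu0, hua⟩, hy0, hy⟩
    have hupi : u < π/2 := lt_of_lt_of_le hua hapi
    have hsinu_pos : 0 < Real.sin u := Real.sin_pos_of_pos_of_lt_pi hu0 (by linarith [Real.pi_pos])
    have hsinu_lt : Real.sin u < 1/c := by
      have := Real.strictMonoOn_sin (a := u) (b := Real.arcsin (1/c))
        ⟨by linarith, hupi.le⟩ ⟨by linarith [Real.pi_pos], hapi⟩ hua
      rwa [hsa] at this
    have hcs1 : c * Real.sin u < 1 := by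
      calc c * Real.sin u < c * (1/c) := by exact mul_lt_mul_of_pos_left hsinu_lt hc0
      _ = 1 := by field_simp
    have hcs0 : 0 < c * Real.sin u := by positivity
    have hypi : y < π/2 := lt_of_lt_of_le hy (Real.arccos_le_pi_div_two.2 hcs0.le)
    have hcosy : c * Real.sin u < Real.cos y := by
      have := Real.strictAntiOn_cos (a := y) (b := Real.arccos (c * Real.sin u))
        ⟨hy0.le, by linarith [Real.pi_pos]⟩
        ⟨Real.arccos_nonneg _, Real.arccos_le_pi _⟩ hy
      rwa [Real.cos_arccos (by linarith) hcs1.le] at this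
    have hcosy0 : 0 < Real.cos y := lt_trans hcs0 hcosy
    have hsu : Real.sin u < 1/c * Real.cos y := by
      rw [one_div, inv_mul_eq_div, lt_div_iff₀ hc0, mul_comm]
      exact hcosy
    refine ⟨⟨hy0, hypi⟩, hu0, ?_⟩
    have ht1 : 1/c * Real.cos y ≤ 1 := by
      calc 1/c * Real.cos y ≤ 1/c * 1 := by
            exact mul_le_mul_of_nonneg_left (Real.cos_le_one y) hinv0.le
      _ ≤ 1 := by linarith
    exact (Real.lt_arcsin_iff_sin_lt ⟨by linarith, hupi.le⟩
      ⟨by nlinarith [Real.sin_nonneg_of_nonneg_of_le_pi (le_of_lt hu0) (by linarith [Real.pi_pos] : u ≤ π)], ht1⟩).2 hsu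
  · rintro ⟨⟨hy0, hypi⟩, hu0, hu⟩
    have hcosy0 : 0 < Real.cos y := Real.cos_pos_of_mem_Ioo ⟨by linarith, hypi⟩
    have hcosy1 : Real.cos y ≤ 1 := Real.cos_le_one y
    have ht0 : 0 < 1/c * Real.cos y := by positivity
    have ht1 : 1/c * Real.cos y ≤ 1/c :=
      mul_le_mul_of_nonneg_left hcosy1 hinv0.le |>.trans_eq (mul_one _)
    have hua : u < Real.arcsin (1/c) :=
      lt_of_lt_of_le hu (Real.monotone_arcsin ht1)
    have hupi : u ≤ π/2 := (lt_of_lt_of_le hua hapi).le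
    have hsu : Real.sin u < 1/c * Real.cos y :=
      (Real.lt_arcsin_iff_sin_lt ⟨by linarith, hupi⟩ ⟨by linarith, by linarith⟩).1 hu
    have hcs : c * Real.sin u < Real.cos y := by
      have := mul_lt_mul_of_pos_left hsu hc0
      rwa [show c * (1/c * Real.cos y) = Real.cos y by field_simp] at this
    have hsinu0 : 0 ≤ Real.sin u :=
      Real.sin_nonneg_of_nonneg_of_le_pi hu0.le (by linarith [Real.pi_pos])
    refine ⟨⟨hu0, hua⟩, hy0, ?_⟩
    have := Real.strictAntiOn_arccos (a := c * Real.sin u) (b := Real.cos y)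
      ⟨by nlinarith, by linarith⟩ ⟨by linarith, hcosy1⟩ hcs
    rwa [Real.arccos_cos hy0.le (by linarith [Real.pi_pos])] at this

lemma key (c : ℝ) (hc : 1 ≤ c) :
    ∫ u in (0:ℝ)..Real.arcsin (1/c), Real.arccos (c * Real.sin u)
      = ∫ x in (0:ℝ)..(π/2), Real.arcsin (1/c * Real.cos x) := by
  have hc0 : (0:ℝ) < c := lt_of_lt_of_le one_pos hc
  have hinv0 : (0:ℝ) < 1/c := by positivity
  have hinv1 : 1/c ≤ 1 := by rw [div_le_one hc0]; exact hc
  have ha0 : 0 ≤ Real.arcsin (1/c) := Real.arcsin_nonneg.2 hinv0.le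
  have hpi2 : (0:ℝ) ≤ π/2 := by positivity
  set f1 : ℝ → ℝ := fun u => Real.arccos (c * Real.sin u) with hf1
  set f2 : ℝ → ℝ := fun y => Real.arcsin (1/c * Real.cos y) with hf2
  have hcf1 : Continuous f1 :=
    Real.continuous_arccos.comp (continuous_const.mul Real.continuous_sin)
  have hcf2 : Continuous f2 :=
    Real.continuous_arcsin.comp (continuous_const.mul Real.continuous_cos)
  have hint1 : IntegrableOn f1 (Ioo 0 (Real.arcsin (1/c))) volume :=
    (hcf1.integrableOn_Icc).mono_set Ioo_subset_Icc_self
  have hint2 : IntegrableOn f2 (Ioo 0 (π/2)) volume :=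
    (hcf2.integrableOn_Icc).mono_set Ioo_subset_Icc_self
  have hz1 : IntegrableOn (fun _ : ℝ => (0:ℝ)) (Ioo 0 (Real.arcsin (1/c))) volume :=
    integrableOn_const measure_Ioo_lt_top.ne
  have hz2 : IntegrableOn (fun _ : ℝ => (0:ℝ)) (Ioo 0 (π/2)) volume :=
    integrableOn_const measure_Ioo_lt_top.ne
  have hv1 : volume (regionBetween (fun _ => (0:ℝ)) f1 (Ioo 0 (Real.arcsin (1/c))))
      = ENNReal.ofReal (∫ u in Ioo 0 (Real.arcsin (1/c)), f1 u) := by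
    rw [Measure.volume_eq_prod, volume_regionBetween_eq_integral hz1 hint1 measurableSet_Ioo
      (fun x _ => Real.arccos_nonneg _)]
    simp
  have hv2 : volume (regionBetween (fun _ => (0:ℝ)) f2 (Ioo 0 (π/2)))
      = ENNReal.ofReal (∫ y in Ioo 0 (π/2), f2 y) := by
    rw [Measure.volume_eq_prod, volume_regionBetween_eq_integral hz2 hint2 measurableSet_Ioo
      (fun y hy => Real.arcsin_nonneg.2 (by
        have : 0 < Real.cos y := Real.cos_pos_of_mem_Ioo ⟨by linarith [hy.1], hy.2⟩
        positivity))]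
    simp
  have hswap : regionBetween (fun _ => (0:ℝ)) f1 (Ioo 0 (Real.arcsin (1/c)))
      = Prod.swap ⁻¹' (regionBetween (fun _ => (0:ℝ)) f2 (Ioo 0 (π/2))) := by
    ext ⟨u, y⟩
    have := key_iff c hc u y
    simp only [regionBetween, mem_setOf_eq, mem_preimage, Prod.fst_swap, Prod.snd_swap,
      Ioo, mem_setOf_eq] at *
    constructor
    · rintro ⟨h1, h2, h3⟩
      obtain ⟨hy, hu⟩ := this.1 ⟨h1, h2, h3⟩
      exact ⟨hy, hu.1, hu.2⟩
    · rintro ⟨h1, h2, h3⟩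
      obtain ⟨hu, hy⟩ := this.2 ⟨h1, h2, h3⟩
      exact ⟨hu, hy.1, hy.2⟩
  have hmeas2 : MeasurableSet (regionBetween (fun _ => (0:ℝ)) f2 (Ioo 0 (π/2))) :=
    measurableSet_regionBetween measurable_const hcf2.measurable measurableSet_Ioo
  have hvols : volume (regionBetween (fun _ => (0:ℝ)) f1 (Ioo 0 (Real.arcsin (1/c))))
      = volume (regionBetween (fun _ => (0:ℝ)) f2 (Ioo 0 (π/2))) := by
    rw [hswap, Measure.volume_eq_prod, Measure.measurePreserving_swap.measure_preimage
      hmeas2.nullMeasurableSet]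
  rw [hv1, hv2] at hvols
  have heq : (∫ u in Ioo 0 (Real.arcsin (1/c)), f1 u) = ∫ y in Ioo 0 (π/2), f2 y := by
    have h1 : 0 ≤ ∫ u in Ioo 0 (Real.arcsin (1/c)), f1 u :=
      setIntegral_nonneg measurableSet_Ioo (fun x _ => Real.arccos_nonneg _)
    have h2 : 0 ≤ ∫ y in Ioo 0 (π/2), f2 y :=
      setIntegral_nonneg measurableSet_Ioo (fun y hy => Real.arcsin_nonneg.2 (by
        have : 0 < Real.cos y := Real.cos_pos_of_mem_Ioo ⟨by linarith [hy.1], hy.2⟩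
        positivity))
    exact (ENNReal.ofReal_eq_ofReal_iff h1 h2).1 hvols
  rw [intervalIntegral.integral_of_le ha0, intervalIntegral.integral_of_le hpi2,
    MeasureTheory.integral_Ioc_eq_integral_Ioo, MeasureTheory.integral_Ioc_eq_integral_Ioo]
  exact heq

/-- For `ω ≥ 1` and `γ ∈ [1/√ω, √ω]`, the area of `Ω^ω_γ` equals
`π² + 4√ω·∫₀^{π/2} [arcsin((γ/√ω)cos x) + arcsin((1/(γ√ω))cos x)] dx`. -/
theorem stmt17 (om ga : ℝ) (hom : 1 ≤ om)
    (hga1 : 1 / Real.sqrt om ≤ ga) (hga2 : ga ≤ Real.sqrt om) :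
    volume (OmDom om ga)
      = ENNReal.ofReal (π ^ 2 + 4 * Real.sqrt om *
          ∫ x in (0 : ℝ)..(π / 2),
            (Real.arcsin ((ga / Real.sqrt om) * Real.cos x)
              + Real.arcsin ((1 / (ga * Real.sqrt om)) * Real.cos x))) := by
  have hpi := Real.pi_pos
  set s : ℝ := Real.sqrt om with hsdef
  have hs1 : (1:ℝ) ≤ s := by
    rw [hsdef, show (1:ℝ) = Real.sqrt 1 by simp]
    exact Real.sqrt_le_sqrt hom
  have hs0 : (0:ℝ) < s := by linarith
  have hga0 : (0:ℝ) < ga := lt_of_lt_of_le (by positivity) hga1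
  have hc : (1:ℝ) ≤ ga * s := by
    have := (div_le_iff₀ hs0).1 hga1
    linarith
  have hc0 : (0:ℝ) < ga * s := by positivity
  set a : ℝ := Real.arcsin (1 / (ga * s)) with hadef
  have hinv0 : (0:ℝ) < 1 / (ga * s) := by positivity
  have hinv1 : 1 / (ga * s) ≤ 1 := by rw [div_le_one hc0]; exact hc
  have ha0 : 0 ≤ a := Real.arcsin_nonneg.2 hinv0.le
  have hapi : a ≤ π / 2 := Real.arcsin_le_pi_div_two _
  set L : ℝ := π / 2 + s * a with hLdef
  have hL2 : π / 2 ≤ L := by nlinarith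
  have hL0 : 0 ≤ L := le_trans (by positivity) hL2
  -- nonnegativity of phiF
  have hnonneg : ∀ x, 0 ≤ phiF om ga x := by
    intro x
    unfold phiF
    rw [← hsdef]
    split_ifs with h
    · have hcos : 0 ≤ Real.cos x := by
        apply Real.cos_nonneg_of_mem_Icc
        rw [abs_le] at h
        exact ⟨h.1, h.2⟩
      have : 0 ≤ Real.arcsin (ga / s * Real.cos x) :=
        Real.arcsin_nonneg.2 (by positivity)
      nlinarith
    · exact Real.arccos_nonneg _
  -- bound on phiF
  have hbound : ∀ x, ‖phiF om ga x‖ ≤ π / 2 + s * (π / 2) + π := by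
    intro x
    rw [Real.norm_eq_abs, abs_of_nonneg (hnonneg x)]
    unfold phiF
    rw [← hsdef]
    split_ifs with h
    · have := Real.arcsin_le_pi_div_two (ga / s * Real.cos x)
      nlinarith
    · have := Real.arccos_le_pi (ga * s * Real.sin ((|x| - π / 2) / s))
      nlinarith
  -- measurability
  have hmeas : Measurable (phiF om ga) := by
    unfold phiF
    refine Measurable.ite (measurableSet_le (by fun_prop) measurable_const) ?_ ?_
    · exact (continuous_const.add (continuous_const.mul
        (Real.continuous_arcsin.comp (continuous_const.mul Real.continuous_cos)))).measurable
    · exact (Real.continuous_arccos.comp (continuous_const.mul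
        (Real.continuous_sin.comp ((continuous_abs.sub continuous_const).div_const _)))).measurable
  -- interval integrability everywhere
  have hii : ∀ A B : ℝ, IntervalIntegrable (phiF om ga) volume A B := by
    intro A B
    constructor <;>
    · refine Integrable.mono' (integrableOn_const measure_Ioc_lt_top.ne)
        hmeas.aestronglyMeasurable.restrict (Filter.Eventually.of_forall fun x => hbound x)
  have hIccInt : IntegrableOn (phiF om ga) (Icc (-L) L) volume := by
    refine Integrable.mono' (integrableOn_const measure_Icc_lt_top.ne)
      hmeas.aestronglyMeasurable.restrict (Filter.Eventually.of_forall fun x => hbound x)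
  have hIccIntNeg : IntegrableOn (fun x => -phiF om ga x) (Icc (-L) L) volume := hIccInt.neg
  -- region identification
  have hreg : OmDom om ga = regionBetween (fun x => -phiF om ga x) (phiF om ga) (Icc (-L) L) := by
    ext p
    simp only [OmDom, mem_setOf_eq, regionBetween, mem_Icc, mem_Ioo, ← hsdef, ← hadef, ← hLdef,
      abs_le, abs_lt]
  rw [hreg, Measure.volume_eq_prod,
    volume_regionBetween_eq_integral hIccIntNeg hIccInt measurableSet_Icc
      (fun x _ => by linarith [hnonneg x])]
  congr 1
  have h2phi : (phiF om ga - fun x => -phiF om ga x) = fun x => 2 * phiF om ga x := by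
    ext x; simp; ring
  rw [h2phi, MeasureTheory.integral_Icc_eq_integral_Ioc,
    ← intervalIntegral.integral_of_le (by linarith : -L ≤ L),
    intervalIntegral.integral_const_mul]
  -- evenness
  have heven : ∀ x, phiF om ga (-x) = phiF om ga x := by
    intro x; unfold phiF; rw [abs_neg, Real.cos_neg]
  have hneg : ∫ x in (-L)..(0:ℝ), phiF om ga x = ∫ x in (0:ℝ)..L, phiF om ga x := by
    have h := intervalIntegral.integral_comp_neg (a := 0) (b := L) (phiF om ga)
    rw [neg_zero] at h
    rw [← h]
    exact intervalIntegral.integral_congr fun x _ => heven x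
  have hsplit : ∫ x in (-L)..L, phiF om ga x
      = (∫ x in (-L)..(0:ℝ), phiF om ga x) + ∫ x in (0:ℝ)..L, phiF om ga x :=
    (intervalIntegral.integral_add_adjacent_intervals (hii _ _) (hii _ _)).symm
  have hsplit2 : ∫ x in (0:ℝ)..L, phiF om ga x
      = (∫ x in (0:ℝ)..(π/2), phiF om ga x) + ∫ x in (π/2)..L, phiF om ga x :=
    (intervalIntegral.integral_add_adjacent_intervals (hii _ _) (hii _ _)).symm
  -- first piece
  have hA : ∫ x in (0:ℝ)..(π/2), phiF om ga x
      = π^2/4 + s * ∫ x in (0:ℝ)..(π/2), Real.arcsin ((ga / s) * Real.cos x) := by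
    have : ∫ x in (0:ℝ)..(π/2), phiF om ga x
        = ∫ x in (0:ℝ)..(π/2), (π/2 + s * Real.arcsin ((ga / s) * Real.cos x)) := by
      apply intervalIntegral.integral_congr
      intro x hx
      rw [uIcc_of_le (by linarith)] at hx
      unfold phiF
      rw [← hsdef, if_pos (by rw [abs_of_nonneg hx.1]; exact hx.2)]
    have hInt2 : IntervalIntegrable (fun x => s * Real.arcsin (ga / s * Real.cos x))
        volume 0 (π/2) :=
      Continuous.intervalIntegrable (continuous_const.mul (Real.continuous_arcsin.comp (continuous_const.mul Real.continuous_cos))) _ _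
    rw [this, intervalIntegral.integral_add intervalIntegrable_const hInt2,
      intervalIntegral.integral_const, intervalIntegral.integral_const_mul]
    rw [smul_eq_mul]
    ring
  -- second piece
  have hB : ∫ x in (π/2)..L, phiF om ga x
      = s * ∫ x in (0:ℝ)..(π/2), Real.arcsin (1 / (ga * s) * Real.cos x) := by
    have h1 : ∫ x in (π/2)..L, phiF om ga x
        = ∫ x in (π/2)..L, Real.arccos (ga * s * Real.sin ((x - π/2) / s)) := by
      apply intervalIntegral.integral_congr_ae
      refine Filter.Eventually.of_forall fun x hx => ?_
      rw [uIoc_of_le hL2] at hx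
      have hx1 : π/2 < x := hx.1
      unfold phiF
      rw [← hsdef, if_neg (by rw [abs_of_pos (by linarith)]; linarith),
        abs_of_pos (by linarith)]
    rw [h1,
      intervalIntegral.integral_comp_sub_right (fun t => Real.arccos (ga * s * Real.sin (t / s))) (π/2)]
    have h2 : L - π/2 = s * a := by rw [hLdef]; ring
    rw [h2, show π/2 - π/2 = (0:ℝ) by ring]
    rw [intervalIntegral.integral_comp_div (fun u => Real.arccos (ga * s * Real.sin u)) (ne_of_gt hs0)]
    rw [zero_div, mul_div_cancel_left₀ _ (ne_of_gt hs0), smul_eq_mul]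
    congr 1
    rw [hadef]
    exact key (ga * s) hc
  -- assemble
  have hRHS : ∫ x in (0:ℝ)..(π/2),
      (Real.arcsin ((ga / s) * Real.cos x) + Real.arcsin ((1 / (ga * s)) * Real.cos x))
      = (∫ x in (0:ℝ)..(π/2), Real.arcsin ((ga / s) * Real.cos x))
        + ∫ x in (0:ℝ)..(π/2), Real.arcsin ((1 / (ga * s)) * Real.cos x) := by
    apply intervalIntegral.integral_add <;>
      exact ((Real.continuous_arcsin.comp
        (continuous_const.mul Real.continuous_cos)).intervalIntegrable _ _)
  rw [hRHS, hsplit, hneg, hsplit2, hA, hB]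
  ring
end

section
/- For ω ≥ 1, the function γ ↦ A(γ) = ∫₀^{π/2} [arcsin((γ/√ω)·cos x) + arcsin((1/(γ√ω))·cos x)] dx, defined for γ ∈ [1/√ω, √ω], has derivative A'(γ) = (1/γ)·∫₀^{π/2} [1/√(ω/γ² - cos²x) - 1/√(ωγ² - cos²x)]·cos x dx, which is ≥ 0 for γ ≥ 1 and ≤ 0 for γ ≤ 1. Consequently A attains its minimum on [1/√ω, √ω] at γ = 1. -/
open Real Set MeasureTheory intervalIntegral


lemma ptwise (om s ga c : ℝ) (hs : s = Real.sqrt om) (hom : 1 ≤ om)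
    (h1 : 1/s < ga) (h2 : ga < s) (hc0 : 0 ≤ c) (hc1 : c ≤ 1) :
    HasDerivAt (fun ga => Real.arcsin (ga / s * c) + Real.arcsin (1/(ga*s) * c))
      ((1/ga) * ((1 / Real.sqrt (om/ga^2 - c^2) - 1 / Real.sqrt (om*ga^2 - c^2)) * c)) ga := by
  have hs0 : 0 < s := by
    rw [hs]; exact Real.sqrt_pos.2 (by linarith)
  have hs1 : 1 ≤ s := by
    rw [hs]; exact Real.one_le_sqrt.2 hom
  have hga0 : 0 < ga := lt_trans (by positivity) h1
  have hom' : om = s^2 := by rw [hs, Real.sq_sqrt (by linarith)]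
  have hgs : 1 < ga * s := by
    rw [div_lt_iff₀ hs0] at h1; linarith
  have hc2 : c^2 ≤ 1 := by nlinarith
  -- positivity facts
  have hP : 0 < s^2 - ga^2*c^2 := by nlinarith [sq_nonneg ga, sq_nonneg c]
  have hQ : 0 < s^2*ga^2 - c^2 := by nlinarith
  set P := Real.sqrt (s^2 - ga^2*c^2) with hPdef
  set Q := Real.sqrt (s^2*ga^2 - c^2) with hQdef
  have hPpos : 0 < P := Real.sqrt_pos.2 hP
  have hQpos : 0 < Q := Real.sqrt_pos.2 hQ
  -- first summand
  have harg1 : ga / s * c ≠ 1 := by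
    have : ga / s * c < 1 := by
      rw [div_mul_eq_mul_div, div_lt_one hs0]; nlinarith
    linarith
  have harg1' : ga / s * c ≠ -1 := by
    have : (0:ℝ) ≤ ga / s * c := by positivity
    intro h; rw [h] at this; linarith
  have harg2 : 1/(ga*s) * c ≠ 1 := by
    have : 1/(ga*s) * c < 1 := by
      rw [one_div, inv_mul_eq_div, div_lt_one (by linarith)]; linarith
    linarith
  have harg2' : 1/(ga*s) * c ≠ -1 := by
    have : (0:ℝ) ≤ 1/(ga*s) * c := by positivity
    intro h; rw [h] at this; linarith
  have d1 : HasDerivAt (fun ga : ℝ => ga / s * c) (1 / s * c) ga :=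
    ((hasDerivAt_id ga).div_const s).mul_const c
  have d2 : HasDerivAt (fun ga : ℝ => 1/(ga*s) * c)
      ((0 * (ga*s) - 1 * (1*s))/(ga*s)^2 * c) ga :=
    (((hasDerivAt_const ga (1:ℝ)).div ((hasDerivAt_id ga).mul_const s)
      (by positivity))).mul_const c
  have D1 : HasDerivAt (fun ga : ℝ => Real.arcsin (ga / s * c))
      (1 / Real.sqrt (1 - (ga / s * c)^2) * (1 / s * c)) ga :=
    by have := (Real.hasDerivAt_arcsin harg1' harg1).comp ga d1; exact this
  have D2 : HasDerivAt (fun ga : ℝ => Real.arcsin (1/(ga*s) * c))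
      (1 / Real.sqrt (1 - (1/(ga*s) * c)^2) * ((0 * (ga*s) - 1 * (1*s))/(ga*s)^2 * c)) ga :=
    by have := (Real.hasDerivAt_arcsin harg2' harg2).comp ga d2; exact this
  have key := D1.add D2
  refine key.congr_deriv ?_
  -- now the algebraic identity
  have e1 : Real.sqrt (1 - (ga / s * c)^2) = P / s := by
    have h : 1 - (ga / s * c)^2 = (P/s)^2 := by
      rw [div_pow, hPdef, Real.sq_sqrt hP.le]; field_simp
    rw [h, Real.sqrt_sq (by positivity)]
  have e2 : Real.sqrt (1 - (1/(ga*s) * c)^2) = Q / (ga*s) := by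
    have h : 1 - (1/(ga*s) * c)^2 = (Q/(ga*s))^2 := by
      rw [div_pow, hQdef, Real.sq_sqrt hQ.le]; field_simp
    rw [h, Real.sqrt_sq (by positivity)]
  have e3 : Real.sqrt (om/ga^2 - c^2) = P / ga := by
    have h : om/ga^2 - c^2 = (P/ga)^2 := by
      rw [div_pow, hPdef, Real.sq_sqrt hP.le, hom']; field_simp
    rw [h, Real.sqrt_sq (by positivity)]
  have e4 : Real.sqrt (om*ga^2 - c^2) = Q := by
    rw [hQdef, hom']
  rw [e1, e2, e3, e4]
  field_simp
  ring

set_option maxHeartbeats 1000000 in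
lemma main_deriv (om : ℝ) (hom : 1 ≤ om) (ga : ℝ)
    (hga : ga ∈ Ioo (1 / Real.sqrt om) (Real.sqrt om)) :
    HasDerivAt (fun ga => ∫ x in (0 : ℝ)..(π / 2),
      (Real.arcsin ((ga / Real.sqrt om) * Real.cos x)
        + Real.arcsin ((1 / (ga * Real.sqrt om)) * Real.cos x)))
      ((1 / ga) * ∫ x in (0 : ℝ)..(π / 2),
        (1 / Real.sqrt (om / ga ^ 2 - Real.cos x ^ 2)
          - 1 / Real.sqrt (om * ga ^ 2 - Real.cos x ^ 2)) * Real.cos x) ga := by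
  obtain ⟨h1, h2⟩ := hga
  set s := Real.sqrt om with hs
  have hs0 : 0 < s := Real.sqrt_pos.2 (by linarith)
  have hs1 : 1 ≤ s := Real.one_le_sqrt.2 hom
  have hom' : om = s ^ 2 := (Real.sq_sqrt (by linarith : (0:ℝ) ≤ om)).symm
  have hga0 : 0 < ga := lt_trans (by positivity) h1
  set lo := (1/s + ga)/2 with hlo
  set hi := (ga + s)/2 with hhi
  have hlo1 : 1/s < lo := by rw [hlo]; linarith
  have hlo2 : lo < ga := by rw [hlo]; linarith
  have hhi1 : ga < hi := by rw [hhi]; linarith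
  have hhi2 : hi < s := by rw [hhi]; linarith
  have hlo0 : 0 < lo := lt_trans (by positivity) hlo1
  have hhi0 : 0 < hi := lt_trans hlo0 (lt_trans hlo2 hhi1)
  set ε := min (ga - lo) (hi - ga) with hε
  have hε0 : 0 < ε := by
    simp only [hε, lt_min_iff]; constructor <;> linarith
  have hball : ∀ y ∈ Metric.ball ga ε, lo < y ∧ y < hi := by
    intro y hy
    rw [Metric.mem_ball, Real.dist_eq, abs_lt] at hy
    have e1 : ε ≤ ga - lo := min_le_left _ _
    have e2 : ε ≤ hi - ga := min_le_right _ _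
    constructor <;> linarith
  -- positivity constants
  have hA1 : 0 < om/hi^2 - 1 := by
    rw [hom', lt_sub_iff_add_lt, zero_add, lt_div_iff₀ (by positivity)]
    nlinarith
  have hA2 : 0 < om*lo^2 - 1 := by
    rw [hom']
    have : 1/s < lo := hlo1
    rw [div_lt_iff₀ hs0] at this
    nlinarith
  set C : ℝ := (1/lo) * ((1 / Real.sqrt (om/hi^2 - 1) + 1 / Real.sqrt (om*lo^2 - 1)) * 1) with hC
  -- the key bounds for y in (lo,hi), c = cos t in [0,1]
  have hcont1 : ∀ y : ℝ, Continuous (fun x => Real.arcsin ((y / s) * Real.cos x)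
      + Real.arcsin ((1 / (y * s)) * Real.cos x)) := by
    intro y
    exact (Real.continuous_arcsin.comp (continuous_const.mul Real.continuous_cos)).add
      (Real.continuous_arcsin.comp (continuous_const.mul Real.continuous_cos))
  have hposP : ∀ y : ℝ, lo < y → y < hi → ∀ x : ℝ, 0 < om / y^2 - Real.cos x ^ 2 := by
    intro y hy1 hy2 x
    have hcx : Real.cos x ^ 2 ≤ 1 := by
      nlinarith [Real.neg_one_le_cos x, Real.cos_le_one x]
    have hy0 : 0 < y := lt_trans hlo0 hy1
    have : 1 < om / y^2 := by
      rw [hom', lt_div_iff₀ (by positivity)]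
      nlinarith
    linarith
  have hposQ : ∀ y : ℝ, lo < y → y < hi → ∀ x : ℝ, 0 < om * y^2 - Real.cos x ^ 2 := by
    intro y hy1 hy2 x
    have hcx : Real.cos x ^ 2 ≤ 1 := by
      nlinarith [Real.neg_one_le_cos x, Real.cos_le_one x]
    have hy0 : 0 < y := lt_trans hlo0 hy1
    have h1s : 1 < lo * s := by
      have := hlo1
      rwa [div_lt_iff₀ hs0] at this
    have hys : 1 < y * s := by nlinarith
    have : 1 < om * y^2 := by
      rw [hom']
      nlinarith [sq_nonneg (y*s - 1)]
    linarith
  have key := intervalIntegral.hasDerivAt_integral_of_dominated_loc_of_deriv_le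
    (F := fun y x => Real.arcsin ((y / s) * Real.cos x) + Real.arcsin ((1 / (y * s)) * Real.cos x))
    (F' := fun y x => (1/y) * ((1 / Real.sqrt (om/y^2 - Real.cos x^2)
        - 1 / Real.sqrt (om*y^2 - Real.cos x^2)) * Real.cos x))
    (x₀ := ga) (a := 0) (b := π/2) (μ := volume) (bound := fun _ => C) (Metric.ball_mem_nhds ga hε0)
    (Filter.Eventually.of_forall fun y => ((hcont1 y).aestronglyMeasurable))
    ((hcont1 ga).intervalIntegrable _ _)
    ?meas' ?bound ?bint ?diff
  case meas' =>
    apply Continuous.aestronglyMeasurable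
    apply continuous_const.mul
    apply Continuous.mul _ Real.continuous_cos
    apply Continuous.sub
    · exact continuous_const.div
        (Real.continuous_sqrt.comp (continuous_const.sub (Real.continuous_cos.pow 2)))
        (fun x => ne_of_gt (Real.sqrt_pos.2 (hposP ga hlo2 hhi1 x)))
    · exact continuous_const.div
        (Real.continuous_sqrt.comp (continuous_const.sub (Real.continuous_cos.pow 2)))
        (fun x => ne_of_gt (Real.sqrt_pos.2 (hposQ ga hlo2 hhi1 x)))
  case bint => exact intervalIntegrable_const
  case bound =>
    apply Filter.Eventually.of_forall
    intro t ht y hy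
    obtain ⟨hy1, hy2⟩ := hball y hy
    have hy0 : 0 < y := lt_trans hlo0 hy1
    rw [uIoc_of_le (by positivity : (0:ℝ) ≤ π/2)] at ht
    have hc0 : 0 ≤ Real.cos t := Real.cos_nonneg_of_mem_Icc
      ⟨by linarith [ht.1, Real.pi_pos], ht.2⟩
    have hc1 : Real.cos t ≤ 1 := Real.cos_le_one t
    set c := Real.cos t
    have hP := hposP y hy1 hy2 t
    have hQ := hposQ y hy1 hy2 t
    have hPs : 0 < Real.sqrt (om/y^2 - c^2) := Real.sqrt_pos.2 hP
    have hQs : 0 < Real.sqrt (om*y^2 - c^2) := Real.sqrt_pos.2 hQ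
    have b1 : 1 / Real.sqrt (om/y^2 - c^2) ≤ 1 / Real.sqrt (om/hi^2 - 1) := by
      apply one_div_le_one_div_of_le (Real.sqrt_pos.2 hA1)
      apply Real.sqrt_le_sqrt
      have : om/hi^2 ≤ om/y^2 := by
        apply div_le_div_of_nonneg_left (by linarith) (by positivity)
        nlinarith
      nlinarith [Real.cos_le_one t, Real.neg_one_le_cos t]
    have b2 : 1 / Real.sqrt (om*y^2 - c^2) ≤ 1 / Real.sqrt (om*lo^2 - 1) := by
      apply one_div_le_one_div_of_le (Real.sqrt_pos.2 hA2)
      apply Real.sqrt_le_sqrt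
      have hml : om*lo^2 ≤ om*y^2 :=
        mul_le_mul_of_nonneg_left (by nlinarith) (by linarith)
      have hcc : c^2 ≤ 1 := by nlinarith
      linarith
    rw [Real.norm_eq_abs, abs_mul, abs_mul]
    have hd : |1 / Real.sqrt (om/y^2 - c^2) - 1 / Real.sqrt (om*y^2 - c^2)|
        ≤ 1 / Real.sqrt (om/hi^2 - 1) + 1 / Real.sqrt (om*lo^2 - 1) := by
      rw [abs_le]
      constructor
      · have : 0 ≤ 1 / Real.sqrt (om/y^2 - c^2) := by positivity
        have h2' : 0 ≤ 1 / Real.sqrt (om*lo^2 - 1) := by positivity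
        linarith
      · have : 0 ≤ 1 / Real.sqrt (om*y^2 - c^2) := by positivity
        have h1' : 0 ≤ 1 / Real.sqrt (om/hi^2 - 1) := by positivity
        linarith
    have h1y : |1/y| = 1/y := abs_of_pos (by positivity)
    have hcc : |c| = c := abs_of_nonneg hc0
    rw [h1y, hcc, hC]
    have hly : 1/y ≤ 1/lo := one_div_le_one_div_of_le hlo0 hy1.le
    apply mul_le_mul hly _ (by positivity) (by positivity)
    apply mul_le_mul hd hc1 hc0
    positivity
  case diff =>
    apply Filter.Eventually.of_forall
    intro t ht y hy
    obtain ⟨hy1, hy2⟩ := hball y hy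
    rw [uIoc_of_le (by positivity : (0:ℝ) ≤ π/2)] at ht
    have hc0 : 0 ≤ Real.cos t := Real.cos_nonneg_of_mem_Icc
      ⟨by linarith [ht.1, Real.pi_pos], ht.2⟩
    exact ptwise om s y (Real.cos t) hs hom (lt_trans hlo1 hy1) (lt_trans hy2 hhi2)
      hc0 (Real.cos_le_one t)
  rw [← intervalIntegral.integral_const_mul]
  exact key.2


/-- For `ω ≥ 1`, the function
`A(γ) = ∫₀^{π/2} [arcsin((γ/√ω)cos x) + arcsin((1/(γ√ω))cos x)] dx` has derivative
`A'(γ) = (1/γ)·∫₀^{π/2} [1/√(ω/γ² - cos²x) - 1/√(ωγ² - cos²x)]·cos x dx` on the interior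
of `[1/√ω, √ω]`, which is `≥ 0` for `γ ≥ 1` and `≤ 0` for `γ ≤ 1`; consequently `A`
attains its minimum on `[1/√ω, √ω]` at `γ = 1`. -/
theorem stmt18 (om : ℝ) (hom : 1 ≤ om)
    (A A' : ℝ → ℝ)
    (hA : A = fun ga => ∫ x in (0 : ℝ)..(π / 2),
      (Real.arcsin ((ga / Real.sqrt om) * Real.cos x)
        + Real.arcsin ((1 / (ga * Real.sqrt om)) * Real.cos x)))
    (hA' : A' = fun ga => (1 / ga) * ∫ x in (0 : ℝ)..(π / 2),
      (1 / Real.sqrt (om / ga ^ 2 - Real.cos x ^ 2)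
        - 1 / Real.sqrt (om * ga ^ 2 - Real.cos x ^ 2)) * Real.cos x) :
    (∀ ga ∈ Ioo (1 / Real.sqrt om) (Real.sqrt om), HasDerivAt A (A' ga) ga) ∧
    (∀ ga ∈ Ioo (1 / Real.sqrt om) (Real.sqrt om), 1 ≤ ga → 0 ≤ A' ga) ∧
    (∀ ga ∈ Ioo (1 / Real.sqrt om) (Real.sqrt om), ga ≤ 1 → A' ga ≤ 0) ∧
    (∀ ga ∈ Icc (1 / Real.sqrt om) (Real.sqrt om), A 1 ≤ A ga) := by
  subst hA hA'
  have hs0 : 0 < Real.sqrt om := Real.sqrt_pos.2 (by linarith)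
  have hs1 : 1 ≤ Real.sqrt om := Real.one_le_sqrt.2 hom
  have hom' : om = Real.sqrt om ^ 2 := (Real.sq_sqrt (by linarith : (0:ℝ) ≤ om)).symm
  set s := Real.sqrt om with hs
  -- part 1
  have part1 : ∀ ga ∈ Ioo (1/s) s, HasDerivAt
      (fun ga => ∫ x in (0 : ℝ)..(π / 2),
        (Real.arcsin ((ga / s) * Real.cos x) + Real.arcsin ((1 / (ga * s)) * Real.cos x)))
      ((1 / ga) * ∫ x in (0 : ℝ)..(π / 2),
        (1 / Real.sqrt (om / ga ^ 2 - Real.cos x ^ 2)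
          - 1 / Real.sqrt (om * ga ^ 2 - Real.cos x ^ 2)) * Real.cos x) ga :=
    fun ga hga => main_deriv om hom ga hga
  -- sign of the integrand
  have part2 : ∀ ga ∈ Ioo (1/s) s, 1 ≤ ga →
      0 ≤ (1 / ga) * ∫ x in (0 : ℝ)..(π / 2),
        (1 / Real.sqrt (om / ga ^ 2 - Real.cos x ^ 2)
          - 1 / Real.sqrt (om * ga ^ 2 - Real.cos x ^ 2)) * Real.cos x := by
    intro ga hga hga1
    obtain ⟨h1, h2⟩ := hga
    have hga0 : 0 < ga := by linarith
    apply mul_nonneg (by positivity)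
    apply intervalIntegral.integral_nonneg (by positivity)
    intro x hx
    have hc0 : 0 ≤ Real.cos x := Real.cos_nonneg_of_mem_Icc
      ⟨by linarith [hx.1, Real.pi_pos], hx.2⟩
    have hc1 : Real.cos x ^ 2 ≤ 1 := by
      nlinarith [Real.cos_le_one x]
    have hP : 0 < om / ga^2 - Real.cos x ^ 2 := by
      have : 1 < om / ga^2 := by
        rw [lt_div_iff₀ (by positivity)]
        nlinarith
      linarith
    have hle : om / ga^2 ≤ om * ga^2 := by
      rw [div_le_iff₀ (by positivity)]
      have hg2 : 1 ≤ ga^2 := by nlinarith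
      have hg4 : 1 ≤ ga^2*ga^2 := by nlinarith
      nlinarith [mul_le_mul_of_nonneg_left hg4 (by linarith : (0:ℝ) ≤ om)]
    apply mul_nonneg _ hc0
    rw [sub_nonneg]
    apply one_div_le_one_div_of_le (Real.sqrt_pos.2 hP)
    apply Real.sqrt_le_sqrt
    linarith
  have part3 : ∀ ga ∈ Ioo (1/s) s, ga ≤ 1 →
      (1 / ga) * (∫ x in (0 : ℝ)..(π / 2),
        (1 / Real.sqrt (om / ga ^ 2 - Real.cos x ^ 2)
          - 1 / Real.sqrt (om * ga ^ 2 - Real.cos x ^ 2)) * Real.cos x) ≤ 0 := by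
    intro ga hga hga1
    obtain ⟨h1, h2⟩ := hga
    have hga0 : 0 < ga := lt_trans (by positivity) h1
    apply mul_nonpos_of_nonneg_of_nonpos (by positivity)
    rw [← neg_nonneg, ← intervalIntegral.integral_neg]
    apply intervalIntegral.integral_nonneg (by positivity)
    intro x hx
    rw [neg_nonneg]
    have hc0 : 0 ≤ Real.cos x := Real.cos_nonneg_of_mem_Icc
      ⟨by linarith [hx.1, Real.pi_pos], hx.2⟩
    have hc1 : Real.cos x ^ 2 ≤ 1 := by
      nlinarith [Real.cos_le_one x]
    have hgs : 1 < ga * s := by rw [div_lt_iff₀ hs0] at h1; linarith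
    have hQ : 0 < om * ga^2 - Real.cos x ^ 2 := by
      have : 1 < om * ga^2 := by rw [hom']; nlinarith [sq_nonneg (ga*s - 1)]
      linarith
    have hle : om * ga^2 ≤ om / ga^2 := by
      rw [le_div_iff₀ (by positivity)]
      have hg2 : ga^2 ≤ 1 := by nlinarith
      have hg4 : ga^2*ga^2 ≤ 1 := by nlinarith [sq_nonneg ga]
      nlinarith [mul_le_mul_of_nonneg_left hg4 (by linarith : (0:ℝ) ≤ om)]
    apply mul_nonpos_of_nonpos_of_nonneg _ hc0
    rw [sub_nonpos]
    apply one_div_le_one_div_of_le (Real.sqrt_pos.2 hQ)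
    apply Real.sqrt_le_sqrt
    linarith
  refine ⟨part1, part2, part3, ?_⟩
  -- continuity of A
  have Bcont : Continuous (fun p : ℝ => ∫ x in (0:ℝ)..(π/2), Real.arcsin (p * Real.cos x)) := by
    apply intervalIntegral.continuous_parametric_intervalIntegral_of_continuous'
    exact Real.continuous_arcsin.comp (continuous_fst.mul (Real.continuous_cos.comp continuous_snd))
  set A : ℝ → ℝ := fun ga => ∫ x in (0 : ℝ)..(π / 2),
      (Real.arcsin ((ga / s) * Real.cos x) + Real.arcsin ((1 / (ga * s)) * Real.cos x)) with hAdef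
  have hAeq : ∀ ga : ℝ, ga ≠ 0 → A ga =
      (fun p => ∫ x in (0:ℝ)..(π/2), Real.arcsin (p * Real.cos x)) (ga / s)
      + (fun p => ∫ x in (0:ℝ)..(π/2), Real.arcsin (p * Real.cos x)) (1 / (ga * s)) := by
    intro ga _
    rw [hAdef]
    simp only
    rw [← intervalIntegral.integral_add]
    · exact (Real.continuous_arcsin.comp
        (continuous_const.mul Real.continuous_cos)).intervalIntegrable _ _
    · exact (Real.continuous_arcsin.comp
        (continuous_const.mul Real.continuous_cos)).intervalIntegrable _ _
  have hApos : ∀ S : Set ℝ, (∀ y ∈ S, (0:ℝ) < y) → ContinuousOn A S := by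
    intro S hS
    have : ContinuousOn (fun ga => (fun p => ∫ x in (0:ℝ)..(π/2), Real.arcsin (p * Real.cos x)) (ga / s)
        + (fun p => ∫ x in (0:ℝ)..(π/2), Real.arcsin (p * Real.cos x)) (1 / (ga * s))) S := by
      apply ContinuousOn.add
      · exact (Bcont.comp (continuous_id.div_const s)).continuousOn
      · apply Bcont.comp_continuousOn
        apply ContinuousOn.div continuousOn_const
          ((continuous_id.mul continuous_const).continuousOn)
        intro y hy
        have := hS y hy
        exact mul_ne_zero this.ne' hs0.ne'
    exact this.congr (fun y hy => hAeq y (ne_of_gt (hS y hy)))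
  -- monotonicity
  have hint1 : Ioo (1:ℝ) s ⊆ Ioo (1/s) s := by
    intro y hy
    exact ⟨lt_of_le_of_lt (by rw [div_le_one hs0]; exact hs1) hy.1, hy.2⟩
  have hint2 : Ioo (1/s) (1:ℝ) ⊆ Ioo (1/s) s := by
    intro y hy
    exact ⟨hy.1, lt_of_lt_of_le hy.2 hs1⟩
  have mono : MonotoneOn A (Icc 1 s) := by
    apply monotoneOn_of_deriv_nonneg (convex_Icc _ _)
    · apply hApos
      intro y hy
      exact lt_of_lt_of_le zero_lt_one hy.1
    · intro y hy
      rw [interior_Icc] at hy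
      exact ((part1 y (hint1 hy)).differentiableAt.differentiableWithinAt)
    · intro y hy
      rw [interior_Icc] at hy
      rw [(part1 y (hint1 hy)).deriv]
      exact part2 y (hint1 hy) hy.1.le
  have anti : AntitoneOn A (Icc (1/s) 1) := by
    apply antitoneOn_of_deriv_nonpos (convex_Icc _ _)
    · apply hApos
      intro y hy
      exact lt_of_lt_of_le (by positivity) hy.1
    · intro y hy
      rw [interior_Icc] at hy
      exact ((part1 y (hint2 hy)).differentiableAt.differentiableWithinAt)
    · intro y hy
      rw [interior_Icc] at hy
      rw [(part1 y (hint2 hy)).deriv]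
      exact part3 y (hint2 hy) hy.2.le
  intro ga hga
  rcases le_total 1 ga with h | h
  · exact mono ⟨le_refl 1, hs1⟩ ⟨h, hga.2⟩ h
  · exact anti ⟨hga.1, h⟩ ⟨by rw [div_le_one hs0]; exact hs1, le_refl 1⟩ h
end
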